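/- For polynomial shape diagrams, for every ordering the set of minimal paths has measure zero with respect to every fully supported ergodic invariant Borel probability measure: the measure of the union of cylinders over minimal finite paths to level n+1 terminating at non-extreme vertices is at most 1/(n+1). -/

import Mathlib

/-- The path space of a polynomial shape diagram: a path is a sequence of
(step, edge-index) pairs, where the step is a nonnegative vector of coordinate sum
`d` and the edge index is less than the multiplicity `mult n u s` of edges from the
current vertex `u` at level `n` along step `s`. -/
abbrev PolyPathSpace (d q : ℕ) (mult : ℕ → (Fin q → ℕ) → (Fin q → ℕ) → ℕ) : Type :=
  {x : ℕ → (Fin q → ℕ) × ℕ //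
    ∀ n, (∑ i, (x n).1 i = d) ∧
      (x n).2 < mult n (fun i => ∑ k ∈ Finset.range n, (x k).1 i) (x n).1}

/-- The vertex at level `n` reached by a (finite or infinite) path: the sum of its
first `n` steps. -/
def polyVertex {q : ℕ} (x : ℕ → (Fin q → ℕ) × ℕ) (n : ℕ) : Fin q → ℕ :=
  fun i => ∑ k ∈ Finset.range n, (x k).1 i

/-- `α` is a valid finite path of length `m` from the root. -/
def ValidFinPath (d q : ℕ) (mult : ℕ → (Fin q → ℕ) → (Fin q → ℕ) → ℕ) (m : ℕ)
    (α : ℕ → (Fin q → ℕ) × ℕ) : Prop :=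
  ∀ k < m, (∑ i, (α k).1 i = d) ∧
    (α k).2 < mult k (fun i => ∑ l ∈ Finset.range k, (α l).1 i) (α k).1

/-- The cylinder of infinite paths beginning with the length-`m` finite path `α`. -/
def polyCyl (d q : ℕ) (mult : ℕ → (Fin q → ℕ) → (Fin q → ℕ) → ℕ) (m : ℕ)
    (α : ℕ → (Fin q → ℕ) × ℕ) : Set (PolyPathSpace d q mult) :=
  {x | ∀ k < m, x.1 k = α k}

section AuxPoly
open Finset
open Fin.NatCast Fin.CommRing

open Finset
-- telescoping overlap lemma
lemma sum_ov (M : ℕ → ℕ) (hM : Monotone M) (L x y : ℕ) (h0 : M 0 ≤ x) (hxy : x ≤ y)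
    (hL : y ≤ M L) : ∑ l ∈ range L, (min (M (l+1)) y - max (M l) x) = y - x := by
  have key : ∀ l, min (M (l+1)) y - max (M l) x
      = max (min (M (l+1)) y) x - max (min (M l) y) x := by
    intro l
    have h1 : M l ≤ M (l+1) := hM (Nat.le_succ l)
    simp only [Nat.min_def, Nat.max_def]
    split_ifs <;> omega
  calc ∑ l ∈ range L, (min (M (l+1)) y - max (M l) x)
      = ∑ l ∈ range L, (max (min (M (l+1)) y) x - max (min (M l) y) x) := by
        exact Finset.sum_congr rfl (fun l _ => key l)
    _ = max (min (M L) y) x - max (min (M 0) y) x := by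
        apply Finset.sum_range_tsub (f := fun l => max (min (M l) y) x)
        intro a b hab
        exact max_le_max_right x (min_le_min_right y (hM hab))
    _ = y - x := by
        have : min (M L) y = y := min_eq_right hL
        have h2 : min (M 0) y ≤ x := le_trans (min_le_left _ _) h0
        rw [this, max_eq_left hxy, max_eq_right h2]

lemma word_lemma (d n a : ℕ) (hd : 0 < d) (ha1 : 1 ≤ a) (ha2 : a + 1 ≤ (n+1)*d) :
    ∃ f : Fin (n+1) → ℕ → ℕ, (∀ t k, f t k ≤ d) ∧
      (∀ t, ∑ k ∈ range (n+1), f t k = a) ∧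
      (∀ t t' : Fin (n+1), (∀ k < n+1, f t k = f t' k) → t = t') := by
  obtain ⟨c, r, hrd, hdm⟩ : ∃ c r, r < d ∧ c * d + r = a :=
    ⟨a/d, a%d, Nat.mod_lt _ hd, by rw [mul_comm]; exact Nat.div_add_mod a d⟩
  have hcn : c ≤ n := by
    have h1 : c * d < (n+1) * d := by omega
    have := Nat.lt_of_mul_lt_mul_right h1
    omega
  set w : ℕ → ℕ := fun m => if m = 0 then r else if m ≤ c then d else 0 with hw
  refine ⟨fun t k => w (((k : Fin (n+1)) - t : Fin (n+1)).val), ?_, ?_, ?_⟩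
  · intro t k
    simp only [hw]
    split_ifs <;> first | omega | (exact False.elim (by assumption))
  · intro t
    have h1 : ∑ k ∈ range (n+1), w (((k : Fin (n+1)) - t : Fin (n+1)).val)
        = ∑ i : Fin (n+1), w ((i - t).val) := by
      rw [← Fin.sum_univ_eq_sum_range (fun k => w (((k : Fin (n+1)) - t : Fin (n+1)).val)) (n+1)]
      exact Finset.sum_congr rfl (fun i _ => by rw [Fin.cast_val_eq_self])
    have h2 : ∑ i : Fin (n+1), w ((i - t).val) = ∑ i : Fin (n+1), w i.val :=
      Equiv.sum_comp (Equiv.subRight t) (fun i => w i.val)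
    rw [h1, h2, Fin.sum_univ_eq_sum_range (fun m => w m) (n+1)]
    rw [Finset.sum_range_succ']
    have h3 : ∑ i ∈ range n, w (i + 1) = ∑ i ∈ range n, (if i < c then d else 0) := by
      refine Finset.sum_congr rfl (fun i _ => ?_)
      simp only [hw]
      split_ifs <;> first | omega | (exact False.elim (by assumption))
    have h4 : ∑ i ∈ range n, (if i < c then d else 0) = ∑ i ∈ range c, (if i < c then d else 0) := by
      refine (Finset.sum_subset (Finset.range_subset_range.mpr hcn) ?_).symm
      intro x hx hnx
      simp only [mem_range] at hx hnx
      simp [hnx]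
    have h5 : ∑ i ∈ range c, (if i < c then d else 0) = c * d := by
      rw [Finset.sum_congr rfl (fun i hi => if_pos (mem_range.mp hi)), Finset.sum_const,
        card_range, smul_eq_mul]
    have h6 : w 0 = r := by simp [hw]
    rw [h3, h4, h5, h6]
    omega
  · intro t t' hEq
    have hEq' : ∀ k < n+1, w (((k : Fin (n+1)) - t : Fin (n+1)).val)
        = w (((k : Fin (n+1)) - t' : Fin (n+1)).val) := hEq
    rcases Nat.eq_zero_or_pos n with hn | hn
    · subst hn
      have h1 := t.isLt
      have h2 := t'.isLt
      exact Fin.ext (by omega)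
    by_cases hr0 : r = 0
    · -- marker: unique k with value 0 followed (cyclically) by value d
      have hc1 : 1 ≤ c := by
        rcases Nat.eq_zero_or_pos c with h | h
        · subst h; simp at hdm; omega
        · exact h
      have marker : ∀ (s k : Fin (n+1)),
          w ((k - s).val) = 0 → w ((k + 1 - s).val) = d → k = s := by
        intro s k h0 h1
        set m := (k - s).val with hm
        have hmlt : m < n + 1 := (k - s).isLt
        have hmeq : (k + 1 - s) = (k - s) + 1 := by ring
        have hval : ((k - s) + 1).val = if m = n then 0 else m + 1 := by
          rcases Nat.lt_or_ge m n with h | h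
          · have h2 : (k - s) < Fin.last n := by
              rw [Fin.lt_def, Fin.val_last]; omega
            rw [Fin.val_add_one_of_lt h2, if_neg (by omega)]
          · have hmn : m = n := by omega
            have hlast : k - s = Fin.last n := Fin.ext (by rw [Fin.val_last]; omega)
            rw [hlast, Fin.last_add_one, if_pos hmn]
            rfl
        rw [hmeq, hval] at h1
        have hm0 : m = 0 ∨ c < m := by
          by_contra hcon
          push_neg at hcon
          simp only [hw] at h0
          rw [if_neg hcon.1, if_pos (by omega)] at h0
          omega
        rcases hm0 with hm0 | hmc
        · have h3 : k - s = 0 := Fin.ext (by rw [Fin.val_zero]; omega)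
          exact sub_eq_zero.mp h3
        · exfalso
          rcases Nat.lt_or_ge m n with h | h
          · rw [if_neg (by omega)] at h1
            simp only [hw] at h1
            rw [if_neg (by omega), if_neg (by omega)] at h1
            omega
          · rw [if_pos (by omega)] at h1
            simp only [hw, if_pos rfl] at h1
            omega
      have e1 : ((t.val : Fin (n+1)) - t) = 0 := by rw [Fin.cast_val_eq_self]; exact sub_self t
      have f1 : w (((t.val : Fin (n+1)) - t : Fin (n+1)).val) = 0 := by
        rw [e1, Fin.val_zero]; simp [hw, hr0]
      have e2 : (((t + 1 : Fin (n+1)).val : Fin (n+1)) - t) = 1 := by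
        rw [Fin.cast_val_eq_self]; ring
      have f2 : w ((((t + 1 : Fin (n+1)).val : Fin (n+1)) - t : Fin (n+1)).val) = d := by
        rw [e2]
        have h1 : (1 : Fin (n+1)).val = 1 := by rw [Fin.val_one']; exact Nat.mod_eq_of_lt (by omega)
        rw [h1]
        simp only [hw]
        rw [if_neg one_ne_zero, if_pos hc1]
      have g1 : w (((t.val : Fin (n+1)) - t' : Fin (n+1)).val) = 0 := by
        rw [← hEq' t.val t.isLt]; exact f1
      have g2 : w ((((t + 1 : Fin (n+1)).val : Fin (n+1)) - t' : Fin (n+1)).val) = d := by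
        rw [← hEq' (t + 1 : Fin (n+1)).val (t + 1 : Fin (n+1)).isLt]; exact f2
      have h5 := marker t' ((t.val : Fin (n+1))) g1
        (by rwa [Fin.cast_val_eq_self] at g2 ⊢)
      rw [Fin.cast_val_eq_self] at h5
      exact h5
    · -- r ≠ 0 : unique k with value r
      have hwr : ∀ m, w m = r → m = 0 := by
        intro m hm
        simp only [hw] at hm
        split_ifs at hm <;> omega
      have e1 : ((t.val : Fin (n+1)) - t) = 0 := by rw [Fin.cast_val_eq_self]; exact sub_self t
      have f1 : w (((t.val : Fin (n+1)) - t : Fin (n+1)).val) = r := by rw [e1]; simp [hw]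
      have g1 : w (((t.val : Fin (n+1)) - t' : Fin (n+1)).val) = r := by
        rw [← hEq' t.val t.isLt]; exact f1
      have h5 := hwr _ g1
      rw [Fin.cast_val_eq_self] at h5
      have h6 : t - t' = 0 := Fin.ext (by simpa using h5)
      exact sub_eq_zero.mp h6

lemma path_lemma (d q n : ℕ) (hd : 0 < d) (mult : ℕ → (Fin q → ℕ) → (Fin q → ℕ) → ℕ)
    (hmult : ∀ k u s, ∑ i, s i = d → 1 ≤ mult k u s)
    (v : Fin q → ℕ) (hv : ∑ i, v i = (n+1)*d)
    (hne : ¬ ∃ i, v = fun k => if k = i then (n+1)*d else 0) :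
    ∃ P : Fin (n+1) → ℕ → (Fin q → ℕ) × ℕ,
      (∀ t, ValidFinPath d q mult (n+1) (P t) ∧ polyVertex (P t) (n+1) = v) ∧
      (∀ t t' : Fin (n+1), (∀ k < n+1, P t k = P t' k) → t = t') := by
  classical
  -- find i with v i ≥ 1 and j ≠ i with v j ≥ 1
  have hpos : ∃ i, 0 < v i := by
    by_contra h
    push_neg at h
    have : ∑ i, v i = 0 := Finset.sum_eq_zero (fun i _ => Nat.le_zero.mp (h i))
    rw [hv] at this
    have : 0 < (n+1)*d := Nat.mul_pos (Nat.succ_pos n) hd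
    omega
  obtain ⟨i, hi⟩ := hpos
  have hj : ∃ j, j ≠ i ∧ 0 < v j := by
    by_contra h
    push_neg at h
    apply hne
    refine ⟨i, funext fun k => ?_⟩
    by_cases hk : k = i
    · subst hk
      have h1 : ∑ j, v j = v k + ∑ j ∈ Finset.univ.erase k, v j :=
        (Finset.add_sum_erase _ _ (Finset.mem_univ k)).symm
      have h2 : ∑ j ∈ Finset.univ.erase k, v j = 0 :=
        Finset.sum_eq_zero (fun j hjm => by
          have := h j (Finset.mem_erase.mp hjm).1
          omega)
      rw [if_pos rfl]
      omega
    · simp only [if_neg hk]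
      have := h k hk
      omega
  obtain ⟨j, hji, hvj⟩ := hj
  set a := v i with ha
  have ha1 : 1 ≤ a := hi
  have ha2 : a + 1 ≤ (n+1)*d := by
    have hsub : ({i, j} : Finset (Fin q)) ⊆ Finset.univ := Finset.subset_univ _
    have hpair : ∑ k ∈ ({i, j} : Finset (Fin q)), v k = v i + v j :=
      Finset.sum_pair (Ne.symm hji)
    have hle : ∑ k ∈ ({i, j} : Finset (Fin q)), v k ≤ ∑ k, v k :=
      Finset.sum_le_sum_of_subset hsub
    omega
  obtain ⟨f, hfle, hfsum, hfinj⟩ := word_lemma d n a hd ha1 ha2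
  -- cumulative coordinate mass (over coordinates ≠ i)
  set M : ℕ → ℕ := fun l => ∑ j' ∈ Finset.univ.filter (fun j' : Fin q => (j':ℕ) < l ∧ j' ≠ i), v j'
    with hM
  have hMmono : Monotone M := by
    intro l1 l2 h
    apply Finset.sum_le_sum_of_subset
    intro j' hj'
    simp only [Finset.mem_filter, Finset.mem_univ, true_and] at hj' ⊢
    exact ⟨lt_of_lt_of_le hj'.1 h, hj'.2⟩
  have hM0 : M 0 = 0 := by simp [hM]
  have hMq : M q = (n+1)*d - a := by
    have h1 : Finset.univ.filter (fun j' : Fin q => (j':ℕ) < q ∧ j' ≠ i)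
        = Finset.univ.erase i := by
      ext j'
      simp [Finset.mem_erase, j'.isLt]
    have h2 : v i + ∑ j' ∈ Finset.univ.erase i, v j' = ∑ j', v j' :=
      Finset.add_sum_erase _ _ (Finset.mem_univ i)
    simp only [hM, h1]
    omega
  -- cumulative capacities
  set Cc : Fin (n+1) → ℕ → ℕ := fun t k => ∑ k' ∈ Finset.range k, (d - f t k') with hCc
  have hCmono : ∀ t, Monotone (Cc t) := by
    intro t l1 l2 h
    exact Finset.sum_le_sum_of_subset (Finset.range_subset_range.mpr h)
  have hC0 : ∀ t, Cc t 0 = 0 := by simp [hCc]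
  have hCtop : ∀ t, Cc t (n+1) = (n+1)*d - a := by
    intro t
    have h1 : Cc t (n+1) + ∑ k ∈ Finset.range (n+1), f t k = ∑ k ∈ Finset.range (n+1), d := by
      simp only [hCc]
      rw [← Finset.sum_add_distrib]
      exact Finset.sum_congr rfl (fun k _ => Nat.sub_add_cancel (hfle t k))
    rw [hfsum t] at h1
    rw [Finset.sum_const, Finset.card_range, smul_eq_mul] at h1
    omega
  have hCstep : ∀ t k, Cc t (k+1) = Cc t k + (d - f t k) := by
    intro t k
    simp only [hCc, Finset.sum_range_succ]
  -- the steps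
  set step : Fin (n+1) → ℕ → Fin q → ℕ := fun t k j' =>
    if j' = i then f t k
    else min (M ((j':ℕ)+1)) (Cc t (k+1)) - max (M (j':ℕ)) (Cc t k) with hstep
  have hMi : M ((i:ℕ)+1) = M (i:ℕ) := by
    simp only [hM]
    congr 1
    ext j'
    simp only [Finset.mem_filter, Finset.mem_univ, true_and]
    constructor
    · rintro ⟨h1, h2⟩
      refine ⟨?_, h2⟩
      have : (j' : ℕ) ≠ (i : ℕ) := fun hc => h2 (Fin.ext hc)
      omega
    · rintro ⟨h1, h2⟩
      exact ⟨by omega, h2⟩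
  -- row sums
  have hrow : ∀ t k, k < n+1 → ∑ j', step t k j' = d := by
    intro t k hk
    have hxy : Cc t k ≤ Cc t (k+1) := hCmono t (Nat.le_succ k)
    have hyM : Cc t (k+1) ≤ M q := by
      rw [hMq]
      rw [← hCtop t]
      exact hCmono t (by omega)
    have hovi : min (M ((i:ℕ)+1)) (Cc t (k+1)) - max (M (i:ℕ)) (Cc t k) = 0 := by
      rw [hMi]
      exact Nat.sub_eq_zero_of_le (le_trans (min_le_left _ _) (le_max_left _ _))
    calc ∑ j', step t k j'
        = step t k i + ∑ j' ∈ Finset.univ.erase i, step t k j' :=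
          (Finset.add_sum_erase _ _ (Finset.mem_univ i)).symm
      _ = f t k + ∑ j' ∈ Finset.univ.erase i,
            (min (M ((j':ℕ)+1)) (Cc t (k+1)) - max (M (j':ℕ)) (Cc t k)) := by
          congr 1
          · simp [hstep]
          · refine Finset.sum_congr rfl (fun j' hj' => ?_)
            simp only [hstep]
            rw [if_neg (Finset.mem_erase.mp hj').1]
      _ = f t k + ∑ j' : Fin q,
            (min (M ((j':ℕ)+1)) (Cc t (k+1)) - max (M (j':ℕ)) (Cc t k)) := by
          congr 1
          exact Finset.sum_erase _ hovi
      _ = f t k + ∑ l ∈ Finset.range q,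
            (min (M (l+1)) (Cc t (k+1)) - max (M l) (Cc t k)) := by
          congr 1
          exact Fin.sum_univ_eq_sum_range (fun l => min (M (l+1)) (Cc t (k+1)) - max (M l) (Cc t k)) q
      _ = f t k + (Cc t (k+1) - Cc t k) := by
          congr 1
          exact sum_ov M hMmono q (Cc t k) (Cc t (k+1)) (by omega) hxy hyM
      _ = d := by
          have := hCstep t k
          have := hfle t k
          omega
  -- column sums
  have hcol : ∀ t j', ∑ k ∈ Finset.range (n+1), step t k j' = v j' := by
    intro t j'
    by_cases hj'i : j' = i
    · subst hj'i
      have : ∀ k, step t k j' = f t k := fun k => by simp [hstep]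
      rw [Finset.sum_congr rfl (fun k _ => this k), hfsum t]
    · have hterm : ∀ k, step t k j'
          = min (Cc t (k+1)) (M ((j':ℕ)+1)) - max (Cc t k) (M (j':ℕ)) := by
        intro k
        simp only [hstep, if_neg hj'i]
        rw [min_comm, max_comm]
      have hMsucc : M ((j':ℕ)+1) = v j' + M (j':ℕ) := by
        have hins : Finset.univ.filter (fun j'' : Fin q => (j'':ℕ) < (j':ℕ)+1 ∧ j'' ≠ i)
            = insert j' (Finset.univ.filter (fun j'' : Fin q => (j'':ℕ) < (j':ℕ) ∧ j'' ≠ i)) := by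
          ext j''
          simp only [Finset.mem_filter, Finset.mem_univ, true_and, Finset.mem_insert]
          constructor
          · rintro ⟨h1, h2⟩
            by_cases hc : (j'' : ℕ) = (j' : ℕ)
            · exact Or.inl (Fin.ext hc)
            · exact Or.inr ⟨by omega, h2⟩
          · rintro (h1 | ⟨h1, h2⟩)
            · subst h1
              exact ⟨by omega, hj'i⟩
            · exact ⟨by omega, h2⟩
        simp only [hM]
        rw [hins, Finset.sum_insert (by simp)]
      have hx : M (j':ℕ) ≤ M ((j':ℕ)+1) := hMmono (Nat.le_succ _)
      have hyC : M ((j':ℕ)+1) ≤ Cc t (n+1) := by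
        rw [hCtop t, ← hMq]
        exact hMmono j'.isLt
      rw [Finset.sum_congr rfl (fun k _ => hterm k)]
      rw [sum_ov (Cc t) (hCmono t) (n+1) (M (j':ℕ)) (M ((j':ℕ)+1)) (by rw [hC0]; omega) hx hyC]
      omega
  refine ⟨fun t k => (step t k, 0), ⟨fun t => ⟨?_, ?_⟩, ?_⟩⟩
  · intro k hk
    refine ⟨hrow t k hk, ?_⟩
    exact lt_of_lt_of_le Nat.zero_lt_one (hmult _ _ _ (hrow t k hk))
  · funext j'
    exact hcol t j'
  · intro t t' h
    apply hfinj
    intro k hk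
    have h1 := h k hk
    have h2 : step t k = step t' k := congrArg Prod.fst h1
    have h3 := congrFun h2 i
    simpa [hstep] using h3

end AuxPoly

/-- For polynomial shape diagrams, for every invariant Borel probability measure and
every choice of one minimal finite path to each vertex, the measure of the union of
the chosen (minimal) cylinders to the non-extreme level-`(n+1)` vertices is at most
`1/(n+1)`. -/
theorem minimal_cylinders_measure_le (d q n : ℕ) (hd : 0 < d) (hq : 2 ≤ q)
    (mult : ℕ → (Fin q → ℕ) → (Fin q → ℕ) → ℕ)
    (hmult : ∀ k u s, ∑ i, s i = d → 1 ≤ mult k u s)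
    (μ : MeasureTheory.Measure (PolyPathSpace d q mult))
    [MeasureTheory.IsProbabilityMeasure μ]
    -- invariance: cylinders over finite paths ending at the same vertex have equal
    -- measure
    (hinv : ∀ m (α β : ℕ → (Fin q → ℕ) × ℕ),
      ValidFinPath d q mult m α → ValidFinPath d q mult m β →
      polyVertex α m = polyVertex β m →
      μ (polyCyl d q mult m α) = μ (polyCyl d q mult m β))
    -- a choice of one (e.g. the minimal) finite path to each level-(n+1) vertex
    (minP : (Fin q → ℕ) → ℕ → (Fin q → ℕ) × ℕ)
    (hminP : ∀ v : Fin q → ℕ, ∑ i, v i = (n + 1) * d →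
      ValidFinPath d q mult (n + 1) (minP v) ∧ polyVertex (minP v) (n + 1) = v) :
    μ (⋃ v ∈ {v : Fin q → ℕ | ∑ i, v i = (n + 1) * d ∧
        ¬ ∃ i, v = fun k => if k = i then (n + 1) * d else 0},
      polyCyl d q mult (n + 1) (minP v)) ≤ 1 / ((n : ENNReal) + 1) := by
  classical
  have hmeas : ∀ (m : ℕ) (α : ℕ → (Fin q → ℕ) × ℕ), MeasurableSet (polyCyl d q mult m α) := by
    intro m α
    have hset : polyCyl d q mult m α
        = ⋂ k ∈ Finset.range m, {x : PolyPathSpace d q mult | x.1 k = α k} := by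
      ext x
      simp [polyCyl]
    rw [hset]
    refine Finset.measurableSet_biInter _ (fun k _ => ?_)
    have hmble : Measurable (fun x : PolyPathSpace d q mult => x.1 k) :=
      (measurable_pi_apply k).comp measurable_subtype_coe
    exact hmble (measurableSet_singleton (α k))
  set V : Finset (Fin q → ℕ) := (Fintype.piFinset (fun _ : Fin q => Finset.range ((n+1)*d+1))).filter
    (fun v => ∑ i, v i = (n+1)*d ∧ ¬ ∃ i, v = fun k => if k = i then (n+1)*d else 0) with hV
  have hVmem : ∀ v, v ∈ V ↔ (∑ i, v i = (n+1)*d ∧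
      ¬ ∃ i, v = fun k => if k = i then (n+1)*d else 0) := by
    intro v
    rw [hV, Finset.mem_filter]
    constructor
    · rintro ⟨_, h⟩; exact h
    · rintro ⟨h1, h2⟩
      refine ⟨?_, h1, h2⟩
      rw [Fintype.mem_piFinset]
      intro i
      rw [Finset.mem_range]
      have : v i ≤ ∑ i', v i' := Finset.single_le_sum (fun _ _ => Nat.zero_le _) (Finset.mem_univ i)
      omega
  have hSV : {v : Fin q → ℕ | ∑ i, v i = (n + 1) * d ∧
      ¬ ∃ i, v = fun k => if k = i then (n + 1) * d else 0} = ↑V := by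
    ext v
    rw [Set.mem_setOf_eq, Finset.mem_coe, hVmem]
  have hex : ∀ v : Fin q → ℕ, ∃ P : Fin (n+1) → ℕ → (Fin q → ℕ) × ℕ,
      (∑ i, v i = (n+1)*d ∧ ¬ ∃ i, v = fun k => if k = i then (n+1)*d else 0) →
      ((∀ t, ValidFinPath d q mult (n+1) (P t) ∧ polyVertex (P t) (n+1) = v) ∧
       (∀ t t' : Fin (n+1), (∀ k < n+1, P t k = P t' k) → t = t')) := by
    intro v
    by_cases h : (∑ i, v i = (n+1)*d ∧ ¬ ∃ i, v = fun k => if k = i then (n+1)*d else 0)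
    · obtain ⟨P, h1, h2⟩ := path_lemma d q n hd mult hmult v h.1 h.2
      exact ⟨P, fun _ => ⟨h1, h2⟩⟩
    · exact ⟨fun _ _ => (fun _ => 0, 0), fun hc => absurd hc h⟩
  choose F hF using hex
  have hvert : ∀ (α : ℕ → (Fin q → ℕ) × ℕ), ∀ x ∈ polyCyl d q mult (n+1) α,
      polyVertex x.1 (n+1) = polyVertex α (n+1) := by
    intro α x hx
    funext i
    exact Finset.sum_congr rfl (fun k hk => by rw [hx k (Finset.mem_range.mp hk)])
  have hdisj : Set.PairwiseDisjoint ↑(V ×ˢ (Finset.univ : Finset (Fin (n+1))))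
      (fun p : (Fin q → ℕ) × Fin (n+1) => polyCyl d q mult (n+1) (F p.1 p.2)) := by
    intro p hp p' hp' hpne
    have hp1 := (Finset.mem_product.mp (Finset.mem_coe.mp hp)).1
    have hp'1 := (Finset.mem_product.mp (Finset.mem_coe.mp hp')).1
    rw [Function.onFun, Set.disjoint_left]
    intro x hx hx'
    obtain ⟨hP1, hinj1⟩ := hF p.1 ((hVmem p.1).mp hp1)
    obtain ⟨hP2, hinj2⟩ := hF p'.1 ((hVmem p'.1).mp hp'1)
    have hv1 : polyVertex x.1 (n+1) = p.1 := by
      rw [hvert _ x hx, (hP1 p.2).2]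
    have hv2 : polyVertex x.1 (n+1) = p'.1 := by
      rw [hvert _ x hx', (hP2 p'.2).2]
    have hvv : p.1 = p'.1 := by rw [← hv1, hv2]
    have htt : p.2 = p'.2 := by
      apply hinj1
      intro k hk
      have e1 : F p.1 p.2 k = x.1 k := (hx k hk).symm
      have e2 : x.1 k = F p'.1 p'.2 k := hx' k hk
      rw [e1, e2, ← hvv]
    exact hpne (Prod.ext hvv htt)
  have hsum1 : ∑ p ∈ V ×ˢ (Finset.univ : Finset (Fin (n+1))),
      μ (polyCyl d q mult (n+1) (F p.1 p.2)) ≤ 1 := by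
    rw [← MeasureTheory.measure_biUnion_finset hdisj (fun p _ => hmeas _ _)]
    calc μ _ ≤ μ Set.univ := MeasureTheory.measure_mono (Set.subset_univ _)
      _ = 1 := MeasureTheory.measure_univ
  have hsum2 : ∑ p ∈ V ×ˢ (Finset.univ : Finset (Fin (n+1))),
      μ (polyCyl d q mult (n+1) (F p.1 p.2))
      = ∑ v ∈ V, ((n : ENNReal) + 1) * μ (polyCyl d q mult (n+1) (minP v)) := by
    rw [Finset.sum_product]
    refine Finset.sum_congr rfl (fun v hv => ?_)
    have hcond := (hVmem v).mp hv
    obtain ⟨hP1, _⟩ := hF v hcond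
    have hmp := hminP v hcond.1
    have heq : ∀ t : Fin (n+1), μ (polyCyl d q mult (n+1) (F v t))
        = μ (polyCyl d q mult (n+1) (minP v)) := by
      intro t
      exact hinv (n+1) _ _ (hP1 t).1 hmp.1 (by rw [(hP1 t).2, hmp.2])
    rw [Finset.sum_congr rfl (fun t _ => heq t), Finset.sum_const, Finset.card_univ,
      Fintype.card_fin, nsmul_eq_mul]
    congr 1
    push_cast
    ring
  have hmain : ((n : ENNReal) + 1) * ∑ v ∈ V, μ (polyCyl d q mult (n+1) (minP v)) ≤ 1 := by
    rw [Finset.mul_sum]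
    rw [hsum2] at hsum1
    exact hsum1
  rw [hSV, Finset.set_biUnion_coe]
  calc μ (⋃ v ∈ V, polyCyl d q mult (n+1) (minP v))
      ≤ ∑ v ∈ V, μ (polyCyl d q mult (n+1) (minP v)) :=
        MeasureTheory.measure_biUnion_finset_le V _
    _ ≤ 1 / ((n : ENNReal) + 1) := by
        rw [ENNReal.le_div_iff_mul_le (Or.inl ?h0) (Or.inl ?htop), mul_comm]
        · exact hmain
        case h0 =>
          intro hc
          rw [add_eq_zero] at hc
          exact one_ne_zero hc.2
        case htop =>
          exact ENNReal.add_ne_top.mpr ⟨ENNReal.natCast_ne_top n, ENNReal.one_ne_top⟩
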